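/- Let W₁,…,W_m be pairwise distinct cyclic words, none of which is a proper power (i.e., no representative of any Wᵢ has the form v^l with l ≥ 2), and let a₁,…,a_m be integers, not all zero. Then there exists a nonempty reduced word u such that Σ_{i=1}^{m} aᵢ · occ(u, Wᵢ) ≠ 0. -/

import Mathlib

open List

/-- A letter of the free group `F_n`: a generator index together with a sign. -/
abbrev Letter (n : ℕ) := Fin n × Bool

/-- The inverse of a letter. -/
def linv {n : ℕ} (a : Letter n) : Letter n := (a.1, !a.2)

@[simp] lemma linv_linv {n : ℕ} (a : Letter n) : linv (linv a) = a := by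
  cases a with
  | mk x b => simp [linv]

/-- The (formal) inverse of a word. -/
def wInv {n : ℕ} (w : List (Letter n)) : List (Letter n) := (w.map linv).reverse

@[simp] lemma wInv_wInv {n : ℕ} (w : List (Letter n)) : wInv (wInv w) = w := by
  simp [wInv, Function.comp_def]

/-- A word is reduced if no two consecutive letters are mutually inverse. -/
def Reduced {n : ℕ} (w : List (Letter n)) : Prop :=
  List.Chain' (fun a b => b ≠ linv a) w

/-- A word is cyclically reduced if it is reduced and its first and last letters
are not mutually inverse. -/
def CyclicallyReduced {n : ℕ} (w : List (Letter n)) : Prop :=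
  Reduced w ∧ ∀ a b, w.head? = some a → w.getLast? = some b → a ≠ linv b

/-- `lpow l m` is the `m`-fold concatenation of the list `l` with itself. -/
def lpow {α : Type*} (l : List α) : ℕ → List α
  | 0 => []
  | m + 1 => l ++ lpow l m

/-- The number of oriented occurrences of `u` in the cyclic word represented by `w`. -/
def orientedOcc {n : ℕ} (u w : List (Letter n)) : ℕ :=
  ((Finset.range w.length).filter (fun i => u <+: lpow (w.rotate i) (u.length + 1))).card

/-- `occ u w` : occurrences of the unoriented word `{u, u⁻¹}` in the cyclic word
represented by `w`. -/
def occ {n : ℕ} (u w : List (Letter n)) : ℕ :=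
  orientedOcc u w + orientedOcc (wInv u) w

lemma occ_wInv {n : ℕ} (u w : List (Letter n)) : occ (wInv u) w = occ u w := by
  simp [occ, wInv_wInv, Nat.add_comm]

/-- Occurrences of `u` as a contiguous factor of `w`. -/
def factOcc {n : ℕ} (u w : List (Letter n)) : ℕ :=
  ((Finset.range (w.length + 1)).filter (fun i => u <+: w.drop i)).card

/-- `occf u w` : occurrences of `{u, u⁻¹}` as a contiguous factor of `w`. -/
def occf {n : ℕ} (u w : List (Letter n)) : ℕ := factOcc u w + factOcc (wInv u) w

/-- Two cyclically reduced words represent the same cyclic word iff one is a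
rotation of the other or of its inverse. -/
def SameCyclicWord {n : ℕ} (v w : List (Letter n)) : Prop :=
  (∃ i, w = v.rotate i) ∨ (∃ i, w = (wInv v).rotate i)

/-- Cyclic reduction: repeatedly delete the first and last letter while they are
mutually inverse. -/
def cyclicReduce {n : ℕ} : List (Letter n) → List (Letter n)
  | [] => []
  | a :: rest =>
    if rest.getLast? = some (linv a) then cyclicReduce rest.dropLast
    else a :: rest
  termination_by w => w.length
  decreasing_by simp [List.length_dropLast] <;> omega



@[simp] lemma lpow_length {α : Type*} (l : List α) (m : ℕ) : (lpow l m).length = m * l.length := by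
  induction m with
  | zero => simp [lpow]
  | succ k ih => simp [lpow, ih]; ring

lemma lpow_add {α : Type*} (l : List α) (a b : ℕ) : lpow l (a + b) = lpow l a ++ lpow l b := by
  induction a with
  | zero => simp [lpow]
  | succ k ih => simp [Nat.succ_add, lpow, ih]

lemma lpow_prefix {α : Type*} (l : List α) {a b : ℕ} (h : a ≤ b) : lpow l a <+: lpow l b := by
  obtain ⟨c, rfl⟩ := Nat.exists_eq_add_of_le h
  rw [lpow_add]; exact prefix_append _ _

lemma lpow_getElem? {α : Type*} (l : List α) (m t : ℕ) (ht : t < m * l.length) :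
    (lpow l m)[t]? = l[t % l.length]? := by
  induction m generalizing t with
  | zero => simp at ht
  | succ k ih =>
    rcases lt_or_ge t l.length with h | h
    · rw [lpow, getElem?_append_left h, Nat.mod_eq_of_lt h]
    · rw [Nat.succ_mul] at ht
      rw [lpow, getElem?_append_right h, ih _ (by omega)]
      congr 1
      conv_rhs => rw [show t = t - l.length + l.length by omega]
      rw [Nat.add_mod_right]

lemma prefix_getElem? {α : Type*} {l₁ l₂ : List α} (h : l₁ <+: l₂) {i : ℕ} (hi : i < l₁.length) :
    l₁[i]? = l₂[i]? := by
  conv_lhs => rw [prefix_iff_eq_take.mp h]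
  rw [getElem?_take, if_pos hi]

def Per {α : Type*} (w : List α) (p : ℕ) : Prop := ∀ t, t + p < w.length → w[t]? = w[t + p]?

lemma per_take {α : Type*} {w : List α} {p : ℕ} (h : Per w p) (L : ℕ) : Per (w.take L) p := by
  intro t ht
  simp only [length_take] at ht
  rw [getElem?_take, getElem?_take, if_pos (by omega), if_pos (by omega)]
  exact h t (by omega)

lemma per_sub {α : Type*} {w : List α} {p q : ℕ} (hpq : p ≤ q) (hp : Per w p) (hq : Per w q)
    (hlen : p + q ≤ w.length) : Per w (q - p) := by
  intro t ht
  rcases le_or_gt p t with h | h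
  · have h1 := hp (t - p) (by omega)
    have h2 := hq (t - p) (by omega)
    rw [show t - p + p = t by omega] at h1
    rw [show t - p + q = t + (q - p) by omega] at h2
    rw [← h1, h2]
  · have h1 := hq t (by omega)
    have h2 := hp (t + (q - p)) (by omega)
    rw [show t + (q - p) + p = t + q by omega] at h2
    rw [h1, h2]

lemma fine_wilf_aux {α : Type*} : ∀ s (p q : ℕ) (w : List α), p + q ≤ s → Per w p → Per w q →
    p + q ≤ w.length → Per w (Nat.gcd p q) := by
  intro s
  induction s with
  | zero =>
    intro p q w hs hp hq hlen
    obtain ⟨rfl, rfl⟩ : p = 0 ∧ q = 0 := by omega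
    simpa using hq
  | succ k ih =>
    intro p q w hs hp hq hlen
    rcases Nat.eq_zero_or_pos p with rfl | hp0
    · simpa using hq
    rcases Nat.eq_zero_or_pos q with rfl | hq0
    · simpa using hp
    rcases le_or_gt p q with h | h
    · have := ih p (q - p) w (by omega) hp (per_sub h hp hq hlen) (by omega)
      rwa [Nat.gcd_sub_self_right h] at this
    · have := ih q (p - q) w (by omega) hq (per_sub h.le hq hp (by omega)) (by omega)
      rwa [Nat.gcd_sub_self_right h.le, Nat.gcd_comm] at this

lemma fine_wilf {α : Type*} {p q : ℕ} {w : List α} (hp : Per w p) (hq : Per w q)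
    (hlen : p + q ≤ w.length) : Per w (Nat.gcd p q) :=
  fine_wilf_aux (p + q) p q w le_rfl hp hq hlen

lemma per_mod {α : Type*} {w : List α} {g : ℕ} (hg : 0 < g) (h : Per w g) :
    ∀ i, i < w.length → w[i]? = w[i % g]? := by
  intro i
  induction i using Nat.strong_induction_on with
  | _ i ih =>
    intro hi
    rcases lt_or_ge i g with h' | h'
    · rw [Nat.mod_eq_of_lt h']
    · have := h (i - g) (by omega)
      rw [show i - g + g = i by omega] at this
      rw [← this, ih (i - g) (by omega) (by omega)]
      congr 1
      conv_rhs => rw [show i = i - g + g by omega, Nat.add_mod_right]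

lemma eq_lpow_of_per {α : Type*} {w : List α} {g : ℕ} (hg : 0 < g) (h : Per w g)
    (hd : g ∣ w.length) : w = lpow (w.take g) (w.length / g) := by
  rcases Nat.eq_zero_or_pos w.length with h0 | h0
  · rw [List.length_eq_zero_iff] at h0; simp [h0, lpow]
  have hgle : g ≤ w.length := Nat.le_of_dvd h0 hd
  have hlen : (lpow (w.take g) (w.length / g)).length = w.length := by
    simp [length_take, Nat.min_eq_left hgle, Nat.div_mul_cancel hd]
  apply List.ext_getElem?
  intro i
  rcases lt_or_ge i w.length with hi | hi
  · rw [lpow_getElem? _ _ _ (by rw [length_take, Nat.min_eq_left hgle, Nat.div_mul_cancel hd]; exact hi)]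
    rw [length_take, Nat.min_eq_left hgle, getElem?_take, if_pos (Nat.mod_lt _ hg)]
    rw [per_mod hg h i hi]
  · rw [getElem?_eq_none hi, getElem?_eq_none (by omega)]

@[simp] lemma wInv_length {n : ℕ} (l : List (Letter n)) : (wInv l).length = l.length := by
  simp [wInv]

lemma wInv_append {n : ℕ} (a b : List (Letter n)) : wInv (a ++ b) = wInv b ++ wInv a := by
  simp [wInv]

lemma lpow_succ' {α : Type*} (l : List α) (k : ℕ) : lpow l (k + 1) = lpow l k ++ l := by
  have h := lpow_add l k 1
  rw [show lpow l 1 = l ++ [] from rfl, List.append_nil] at h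
  exact h

lemma wInv_lpow {n : ℕ} (x : List (Letter n)) (k : ℕ) : wInv (lpow x k) = lpow (wInv x) k := by
  induction k with
  | zero => simp [lpow, wInv]
  | succ m ih => rw [show lpow x (m+1) = x ++ lpow x m from rfl, wInv_append, ih, lpow_succ']

lemma lpow_nil {α : Type*} (k : ℕ) : lpow ([] : List α) k = [] := by
  induction k with
  | zero => rfl
  | succ m ih => rw [show lpow ([]:List α) (m+1) = [] ++ lpow ([]:List α) m from rfl, ih]; rfl

lemma reduced_lpow {n : ℕ} {x : List (Letter n)} (hx : CyclicallyReduced x) (k : ℕ) :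
    Reduced (lpow x k) := by
  rcases eq_or_ne x [] with rfl | hxe
  · rw [lpow_nil]; exact List.isChain_nil
  induction k with
  | zero => exact List.isChain_nil
  | succ m ih =>
    rw [show lpow x (m+1) = x ++ lpow x m from rfl]
    rw [Reduced, List.Chain', List.isChain_append]
    refine ⟨hx.1, ih, ?_⟩
    intro b hb c hc
    rcases m with _ | m'
    · simp [lpow] at hc
    · obtain ⟨d, x', rfl⟩ := List.exists_cons_of_ne_nil hxe
      have hc' : c = d := by
        rw [show lpow (d::x') (m'+1) = (d::x') ++ lpow (d::x') m' from rfl] at hc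
        simp at hc; exact hc.symm
      subst hc'
      exact hx.2 c b rfl (by simpa using hb)

lemma main_lemma {n : ℕ} (x v : List (Letter n)) (hx : x ≠ []) (hv : v ≠ []) (k M : ℕ)
    (hk : x.length + v.length ≤ k * x.length)
    (hM : k * x.length ≤ M * v.length)
    (hxp : ¬∃ (r : List (Letter n)) (l : ℕ), 2 ≤ l ∧ x = lpow r l)
    (hvp : ¬∃ (r : List (Letter n)) (l : ℕ), 2 ≤ l ∧ v = lpow r l)
    (hpre : lpow x k <+: lpow v M) : v = x := by
  have hp : 0 < x.length := List.length_pos_iff.mpr hx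
  have hq : 0 < v.length := List.length_pos_iff.mpr hv
  set z := lpow x k with hz
  have hzlen : z.length = k * x.length := lpow_length x k
  have hk1 : 1 ≤ k := by
    rcases Nat.eq_zero_or_pos k with rfl | h
    · rw [Nat.zero_mul] at hk; omega
    · exact h
  have hM1 : 1 ≤ M := by
    rcases Nat.eq_zero_or_pos M with rfl | h
    · rw [Nat.zero_mul] at hM
      have h2 : 0 < k * x.length := Nat.mul_pos hk1 hp
      omega
    · exact h
  have hpkp : x.length ≤ k * x.length := Nat.le_mul_of_pos_left x.length hk1
  have hPerp : Per z x.length := by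
    intro t ht
    rw [hzlen] at ht
    rw [hz, lpow_getElem? _ _ _ (by omega), lpow_getElem? _ _ _ ht, Nat.add_mod_right]
  have hPerq : Per z v.length := by
    intro t ht
    rw [hzlen] at ht
    have h1 : t < z.length := by rw [hzlen]; omega
    have h2 : t + v.length < z.length := by rw [hzlen]; omega
    rw [prefix_getElem? hpre h1, prefix_getElem? hpre h2]
    rw [lpow_getElem? _ _ _ (by omega), lpow_getElem? _ _ _ (by omega), Nat.add_mod_right]
  have hgper := fine_wilf hPerp hPerq (by rw [hzlen]; omega)
  set g := Nat.gcd x.length v.length with hgdef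
  have hg0 : 0 < g := Nat.gcd_pos_of_pos_left v.length hp
  have hzx : z = x ++ lpow x (k - 1) := by
    conv_lhs => rw [hz, show k = (k-1)+1 by omega]
    rfl
  have hxz : x = z.take x.length := by
    rw [hzx, List.take_left]
  have hPerxg : Per x g := by rw [hxz]; exact per_take hgper x.length
  have hgp : g ∣ x.length := Nat.gcd_dvd_left x.length v.length
  have hx2 := eq_lpow_of_per hg0 hPerxg hgp
  have hpg : x.length = g := by
    by_contra hne
    obtain ⟨c, h1⟩ := hgp
    have hdiv : x.length / g = c := by rw [h1, Nat.mul_div_cancel_left _ hg0]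
    rw [hdiv] at hx2
    have h2 : c ≠ 0 := by rintro rfl; rw [mul_zero] at h1; omega
    have h3 : c ≠ 1 := by rintro rfl; rw [mul_one] at h1; exact hne h1
    exact hxp ⟨x.take g, c, by omega, hx2⟩
  have hpq : x.length ∣ v.length := by rw [hpg]; exact Nat.gcd_dvd_right x.length v.length
  have hpleq : x.length ≤ v.length := Nat.le_of_dvd hq hpq
  have hvz : v <+: z := by
    refine List.prefix_of_prefix_length_le ?_ hpre (by rw [hzlen]; omega)
    rw [show M = (M-1)+1 by omega, show lpow v ((M-1)+1) = v ++ lpow v (M-1) from rfl]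
    exact List.prefix_append _ _
  have hvzt : v = z.take v.length := List.prefix_iff_eq_take.mp hvz
  have hPervp : Per v x.length := by rw [hvzt]; exact per_take hPerp v.length
  have hv2 := eq_lpow_of_per hp hPervp hpq
  have hvtp : v.take x.length = x := by
    rw [hvzt, List.take_take, inf_eq_left.mpr hpleq, ← hxz]
  have hqp : v.length = x.length := by
    by_contra hne
    obtain ⟨c, h1⟩ := hpq
    have hdiv : v.length / x.length = c := by rw [h1, Nat.mul_div_cancel_left _ hp]
    rw [hdiv] at hv2
    have h2 : c ≠ 0 := by rintro rfl; rw [mul_zero] at h1; omega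
    have h3 : c ≠ 1 := by rintro rfl; rw [mul_one] at h1; exact hne h1
    exact hvp ⟨v.take x.length, c, by omega, hv2⟩
  rw [hv2, hvtp, hqp, Nat.div_self hp]
  rw [show lpow x 1 = x ++ [] from rfl, List.append_nil]

/-- If `W₁, …, W_m` are pairwise distinct cyclic words, none a proper
power, and `a₁, …, a_m` are integers not all zero, then some nonempty reduced word `u`
has `Σ aᵢ · occ(u, Wᵢ) ≠ 0`. -/
theorem linear_independence_of_counts (n m : ℕ) (hm : 1 ≤ m)
    (w : Fin m → List (Letter n))
    (hne : ∀ i, w i ≠ []) (hcr : ∀ i, CyclicallyReduced (w i))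
    (hdist : ∀ i j, i ≠ j → ¬ SameCyclicWord (w i) (w j))
    (hnp : ∀ (i : Fin m) (v : List (Letter n)), SameCyclicWord (w i) v →
      ¬ ∃ (p : List (Letter n)) (l : ℕ), 2 ≤ l ∧ v = lpow p l)
    (a : Fin m → ℤ) (ha : ∃ i, a i ≠ 0) :
    ∃ u : List (Letter n), u ≠ [] ∧ Reduced u ∧
      (∑ i, a i * (occ u (w i) : ℤ)) ≠ 0 := by
  obtain ⟨i₀, hai⟩ := ha
  set S := Finset.univ.sup (fun j => (w j).length) with hS
  set K := 1 + S with hK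
  set x := w i₀ with hx
  have hp : 0 < x.length := List.length_pos_iff.mpr (hne i₀)
  set u := lpow x K with hu
  have hulen : u.length = K * x.length := lpow_length x K
  have hune : u ≠ [] := by
    intro h
    have h0 : u.length = 0 := by rw [h]; rfl
    rw [hulen] at h0
    have hK0 : 0 < K := by rw [hK]; omega
    have := Nat.mul_pos hK0 hp
    omega
  refine ⟨u, hune, reduced_lpow (hcr i₀) K, ?_⟩
  have key : ∀ j, j ≠ i₀ → occ u (w j) = 0 := by
    intro j hj
    have hq : 0 < (w j).length := List.length_pos_iff.mpr (hne j)
    have hqS : (w j).length ≤ S := by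
      simpa using Finset.le_sup (f := fun j => (w j).length) (Finset.mem_univ j)
    have hSp : S ≤ S * x.length := Nat.le_mul_of_pos_right S hp
    have hkbound : x.length + (w j).length ≤ K * x.length := by
      rw [hK, Nat.add_mul, one_mul]; omega
    rw [occ]
    have h1 : orientedOcc u (w j) = 0 := by
      rw [orientedOcc, Finset.card_eq_zero, Finset.filter_eq_empty_iff]
      intro t ht hpre
      rw [Finset.mem_range] at ht
      set v := (w j).rotate t with hv
      have hvlen : v.length = (w j).length := List.length_rotate _ _
      have hvne : v ≠ [] := List.length_pos_iff.mp (by omega)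
      have hMbound : K * x.length ≤ (u.length + 1) * v.length := by
        have := Nat.le_mul_of_pos_right (u.length + 1) (show 0 < v.length by omega)
        omega
      have hveq : v = x :=
        main_lemma x v (hne i₀) hvne K (u.length + 1) (by omega) hMbound
          (hnp i₀ x (Or.inl ⟨0, (List.rotate_zero x).symm⟩))
          (hnp j v (Or.inl ⟨t, rfl⟩))
          (by rw [hu] at hpre ⊢; exact hpre)
      apply hdist i₀ j (Ne.symm hj)
      left
      refine ⟨(w j).length - t, ?_⟩
      rw [← hx, ← hveq, hv, List.rotate_rotate,
        show t + ((w j).length - t) = (w j).length by omega, List.rotate_length]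
    have h2 : orientedOcc (wInv u) (w j) = 0 := by
      rw [orientedOcc, Finset.card_eq_zero, Finset.filter_eq_empty_iff]
      intro t ht hpre
      rw [Finset.mem_range] at ht
      set v := (w j).rotate t with hv
      have hvlen : v.length = (w j).length := List.length_rotate _ _
      have hvne : v ≠ [] := List.length_pos_iff.mp (by omega)
      have hinvlen : (wInv u).length = K * x.length := by rw [wInv_length, hulen]
      have hxilen : (wInv x).length = x.length := wInv_length x
      have hMbound : K * (wInv x).length ≤ ((wInv u).length + 1) * v.length := by
        rw [hxilen, hinvlen]
        have := Nat.le_mul_of_pos_right (K * x.length + 1) (show 0 < v.length by omega)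
        omega
      have hveq : v = wInv x := by
        refine main_lemma (wInv x) v ?_ hvne K ((wInv u).length + 1)
          (by rw [hxilen]; omega) hMbound
          (hnp i₀ (wInv x) (Or.inr ⟨0, (List.rotate_zero _).symm⟩))
          (hnp j v (Or.inl ⟨t, rfl⟩)) ?_
        · intro h
          have : x.length = 0 := by rw [← wInv_length, h]; rfl
          omega
        · rw [← wInv_lpow, ← hu]; exact hpre
      apply hdist i₀ j (Ne.symm hj)
      right
      refine ⟨(w j).length - t, ?_⟩
      rw [← hx, ← hveq, hv, List.rotate_rotate,
        show t + ((w j).length - t) = (w j).length by omega, List.rotate_length]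
    omega
  rw [Finset.sum_eq_single i₀ (fun j _ hj => by rw [key j hj]; simp)
    (fun h => absurd (Finset.mem_univ i₀) h)]
  refine mul_ne_zero hai ?_
  have hocc : orientedOcc u (w i₀) ≠ 0 := by
    apply Finset.card_ne_zero_of_mem (a := 0)
    rw [Finset.mem_filter, Finset.mem_range]
    refine ⟨hp, ?_⟩
    rw [List.rotate_zero, hu, hulen]
    exact lpow_prefix x (by nlinarith)
  have : occ u (w i₀) ≠ 0 := by rw [occ]; omega
  exact_mod_cast this
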